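/- Let μ and ν be probability measures on a measurable space S, and let E ⊆ S be a measurable set with μ(E) ≥ 1 − ε and ν(E) ≥ 1 − ε for some ε ∈ [0, 1/4]. Then d_TV(μ, ν) − 4ε ≤ d_TV(μ|E, ν|E). -/

import Mathlib

open MeasureTheory

/-- Total variation distance between two measures: the supremum over measurable
sets `A` of `|μ(A) - ν(A)|`. -/
noncomputable def tvDist {S : Type*} [MeasurableSpace S] (μ ν : Measure S) : ℝ :=
  ⨆ A : {A : Set S // MeasurableSet A}, |(μ A.1).toReal - (ν A.1).toReal|

/-- The conditional measure `μ | E`, defined by `(μ|E)(A) = μ(A ∩ E)/μ(E)`. -/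
noncomputable def condMeasure {S : Type*} [MeasurableSpace S] (μ : Measure S)
    (E : Set S) : Measure S :=
  (μ E)⁻¹ • μ.restrict E

lemma condMeasure_toReal {S : Type*} [MeasurableSpace S] (μ : Measure S)
    [IsProbabilityMeasure μ] (E : Set S) (hE : MeasurableSet E) (A : Set S) :
    ((condMeasure μ E) A).toReal = (μ E).toReal⁻¹ * (μ (A ∩ E)).toReal := by
  simp [condMeasure, Measure.restrict_apply' hE, ENNReal.toReal_mul, ENNReal.toReal_inv]

lemma aux_abs_le {S : Type*} [MeasurableSpace S] (μ : Measure S)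
    [IsProbabilityMeasure μ] (E : Set S) (hE : MeasurableSet E)
    (ε : ℝ) (hε0 : 0 ≤ ε) (hε1 : ε ≤ 1/4)
    (hμE : ENNReal.ofReal (1 - ε) ≤ μ E) (A : Set S) :
    |(μ A).toReal - ((condMeasure μ E) A).toReal| ≤ ε := by
  have hfin : μ E ≠ ⊤ := measure_ne_top μ E
  have he1 : 1 - ε ≤ (μ E).toReal := by
    rw [← ENNReal.ofReal_le_iff_le_toReal hfin] at *
    exact hμE
  set e := (μ E).toReal with he
  set a := (μ (A ∩ E)).toReal with ha
  set b := (μ (A \ E)).toReal with hb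
  have hsum : a + b = (μ A).toReal := by
    rw [ha, hb, ← ENNReal.toReal_add (measure_ne_top _ _) (measure_ne_top _ _),
      measure_inter_add_diff A hE]
  have hcond : ((condMeasure μ E) A).toReal = e⁻¹ * a := condMeasure_toReal μ E hE A
  have he0 : (0:ℝ) < e := by linarith
  have hae : a ≤ e := by
    exact ENNReal.toReal_mono hfin (measure_mono Set.inter_subset_right)
  have ha0 : 0 ≤ a := ENNReal.toReal_nonneg
  have hb0 : 0 ≤ b := ENNReal.toReal_nonneg
  have hbe : b ≤ 1 - e := by
    have hcompl : e + (μ Eᶜ).toReal = 1 := by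
      rw [he, ← ENNReal.toReal_add (measure_ne_top _ _) (measure_ne_top _ _),
        measure_add_measure_compl hE]
      simp
    have : b ≤ (μ Eᶜ).toReal :=
      ENNReal.toReal_mono (measure_ne_top _ _) (measure_mono (Set.diff_subset_compl A E))
    linarith
  have ht : e⁻¹ * a * e = a := by field_simp
  have ht0 : 0 ≤ e⁻¹ * a := mul_nonneg (by positivity) ha0
  have htle1 : e⁻¹ * a ≤ 1 := by
    rw [← mul_le_mul_iff_of_pos_right he0, ht, one_mul]; exact hae
  have hta : a ≤ e⁻¹ * a := by nlinarith
  rw [← hsum, hcond, abs_le]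
  constructor <;> nlinarith

lemma cond_toReal_mem {S : Type*} [MeasurableSpace S] (μ : Measure S)
    [IsProbabilityMeasure μ] (E : Set S) (hE : MeasurableSet E)
    (hpos : (0:ℝ) < (μ E).toReal) (A : Set S) :
    ((condMeasure μ E) A).toReal ≤ 1 := by
  rw [condMeasure_toReal μ E hE A]
  have hae : (μ (A ∩ E)).toReal ≤ (μ E).toReal :=
    ENNReal.toReal_mono (measure_ne_top _ _) (measure_mono Set.inter_subset_right)
  rw [inv_mul_le_iff₀ hpos, mul_one]
  exact hae

/-- If `μ(E), ν(E) ≥ 1 - ε` for some `ε ∈ [0, 1/4]`, then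
`d_TV(μ,ν) - 4ε ≤ d_TV(μ|E, ν|E)`. -/
theorem tvDist_cond_ge {S : Type*} [MeasurableSpace S]
    (μ ν : Measure S) [IsProbabilityMeasure μ] [IsProbabilityMeasure ν]
    (E : Set S) (hE : MeasurableSet E) (ε : ℝ) (hε0 : 0 ≤ ε) (hε1 : ε ≤ 1/4)
    (hμE : ENNReal.ofReal (1 - ε) ≤ μ E)
    (hνE : ENNReal.ofReal (1 - ε) ≤ ν E) :
    tvDist μ ν - 4 * ε ≤ tvDist (condMeasure μ E) (condMeasure ν E) := by
  have hμe : 1 - ε ≤ (μ E).toReal := by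
    rw [← ENNReal.ofReal_le_iff_le_toReal (measure_ne_top μ E)]; exact hμE
  have hνe : 1 - ε ≤ (ν E).toReal := by
    rw [← ENNReal.ofReal_le_iff_le_toReal (measure_ne_top ν E)]; exact hνE
  have hμpos : (0:ℝ) < (μ E).toReal := by linarith
  have hνpos : (0:ℝ) < (ν E).toReal := by linarith
  set μ' := condMeasure μ E
  set ν' := condMeasure ν E
  have hbdd : BddAbove (Set.range fun A : {A : Set S // MeasurableSet A} =>
      |(μ' A.1).toReal - (ν' A.1).toReal|) := by
    refine ⟨1, ?_⟩
    rintro x ⟨A, rfl⟩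
    have h1 := cond_toReal_mem μ E hE hμpos A.1
    have h2 := cond_toReal_mem ν E hE hνpos A.1
    have h3 : (0:ℝ) ≤ (μ' A.1).toReal := ENNReal.toReal_nonneg
    have h4 : (0:ℝ) ≤ (ν' A.1).toReal := ENNReal.toReal_nonneg
    rw [abs_le]; constructor <;> simp only [μ', ν'] at * <;> linarith
  have htv0 : 0 ≤ tvDist μ' ν' := by
    have := le_ciSup hbdd (⟨∅, MeasurableSet.empty⟩ : {A : Set S // MeasurableSet A})
    calc (0:ℝ) ≤ _ := abs_nonneg _
      _ ≤ tvDist μ' ν' := this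
  have key : ∀ A : {A : Set S // MeasurableSet A},
      |(μ A.1).toReal - (ν A.1).toReal| ≤ tvDist μ' ν' + 4 * ε := by
    intro A
    have h1 := aux_abs_le μ E hE ε hε0 hε1 hμE A.1
    have h2 := aux_abs_le ν E hE ε hε0 hε1 hνE A.1
    have h3 : |(μ' A.1).toReal - (ν' A.1).toReal| ≤ tvDist μ' ν' := le_ciSup hbdd A
    have := abs_sub_abs_le_abs_sub ((μ A.1).toReal - (ν A.1).toReal) 0
    rw [abs_le] at h1 h2 h3
    rw [abs_le]
    constructor <;> linarith
  have : tvDist μ ν ≤ tvDist μ' ν' + 4 * ε := by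
    apply Real.iSup_le key
    linarith
  linarith
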